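/- arXiv:0905.4067 — 3 statements merged into one kernel-verified Lean document; each statement's English description precedes it below -/
import Mathlib

section
/- Let X be a Hilbert C*-module over a C*-algebra A, y₁,…,yₙ ∈ X and a₁,…,aₙ ∈ A. Then the self-adjoint element ∑_{i≠j} aᵢ*⟨yᵢ,yⱼ⟩aⱼ satisfies (∑_{i≠j} aᵢ*⟨yᵢ,yⱼ⟩aⱼ)² ≤ (n−1) · (∑ᵢ ‖aᵢ‖²) · (max_{1≤i≤n} ∑_{j≠i} ‖⟨yᵢ,yⱼ⟩‖²) · ∑ᵢ aᵢ*aᵢ, as an inequality in the order of A. -/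
open scoped RightActions

/-- The December-2024 Mathlib `CStarModule`: a right Hilbert `A`-module (action `SMul Aᵐᵒᵖ E`),
with inner product `A`-linear on the right: `⟪x, y <• a⟫ = ⟪x, y⟫ * a`. -/
class CStarModuleRight (A E : Type*) [NonUnitalSemiring A] [StarRing A]
    [Module ℂ A] [AddCommGroup E] [Module ℂ E] [PartialOrder A] [SMul Aᵐᵒᵖ E] [Norm A] [Norm E]
    extends Inner A E where
  inner_add_right {x} {y} {z} : inner x (y + z) = inner x y + inner x z
  inner_self_nonneg {x} : 0 ≤ inner x x
  inner_self {x} : inner x x = 0 ↔ x = 0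
  inner_op_smul_right {a : A} {x y : E} : inner x (y <• a) = inner x y * a
  inner_smul_right_complex {z : ℂ} {x} {y} : inner x (z • y) = z • inner x y
  star_inner x y : star (inner x y) = inner y x
  norm_eq_sqrt_norm_inner_self x : ‖x‖ = √‖inner x x‖

open WithCStarModule CStarModule in
private lemma key_cs {A : Type*} [NonUnitalCStarAlgebra A] [PartialOrder A] [StarOrderedRing A]
    {n : ℕ} (c a : Fin n → A) :
    star (∑ j, c j * a j) * (∑ j, c j * a j) ≤ (∑ j, ‖c j‖ ^ 2) • ∑ j, star (a j) * a j := by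
  let x : C⋆ᵐᵒᵈ(A, Fin n → A) := (equiv _ _).symm fun j => c j
  let y : C⋆ᵐᵒᵈ(A, Fin n → A) := (equiv _ _).symm fun j => star (a j)
  have hxy : (inner A y x : A) = ∑ j, c j * a j := by
    simp [pi_inner, inner_def, x, y]
  have hyx : (inner A x y : A) = star (∑ j, c j * a j) := by
    rw [← hxy, star_inner]
  have hyy : (inner A y y : A) = ∑ j, star (a j) * a j := by
    simp [pi_inner, inner_def, y]
  have h := inner_mul_inner_swap_le (A := A) (x := x) (y := y)
  rw [hxy, hyx, hyy] at h
  refine h.trans ?_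
  have hx : ‖x‖ ^ 2 ≤ ∑ j, ‖c j‖ ^ 2 := by
    rw [pi_norm_sq]
    refine (norm_sum_le _ _).trans (le_of_eq ?_)
    refine Finset.sum_congr rfl fun j _ => ?_
    simp [inner_def, x, CStarRing.norm_self_mul_star, sq]
  have hP : (0 : A) ≤ ∑ j, star (a j) * a j :=
    Finset.sum_nonneg fun j _ => star_mul_self_nonneg _
  exact smul_le_smul_of_nonneg_right hx hP

theorem stmt_12 {A E : Type*} [NonUnitalCStarAlgebra A] [PartialOrder A] [StarOrderedRing A]
    [AddCommGroup E] [Module ℂ E] [SMul Aᵐᵒᵖ E] [Norm E] [CStarModuleRight A E]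
    {n : ℕ} (hn : 0 < n) (y : Fin n → E) (a : Fin n → A) :
    (∑ i, ∑ j, if i = j then 0 else star (a i) * (inner A (y i) (y j) : A) * a j) *
        (∑ i, ∑ j, if i = j then 0 else star (a i) * (inner A (y i) (y j) : A) * a j) ≤
      (((n : ℝ) - 1) * (∑ i, ‖a i‖ ^ 2) *
        (Finset.univ.sup' ⟨⟨0, hn⟩, Finset.mem_univ _⟩
          fun i => ∑ j, if j = i then 0 else ‖(inner A (y i) (y j) : A)‖ ^ 2)) •
        ∑ i, star (a i) * a i := by
  set c : Fin n → A := fun j => ∑ i, if i = j then 0 else star (a i) * (inner A (y i) (y j) : A)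
    with hc
  set S : A := ∑ i, ∑ j, if i = j then 0 else star (a i) * (inner A (y i) (y j) : A) * a j with hS
  set M : ℝ := Finset.univ.sup' ⟨⟨0, hn⟩, Finset.mem_univ _⟩
      fun i => ∑ j, if j = i then 0 else ‖(inner A (y i) (y j) : A)‖ ^ 2 with hM
  have hSc : S = ∑ j, c j * a j := by
    rw [hS, Finset.sum_comm]
    refine Finset.sum_congr rfl fun j _ => ?_
    rw [hc, Finset.sum_mul]
    exact Finset.sum_congr rfl fun i _ => by split_ifs <;> simp
  have hSstar : star S = S := by
    conv_lhs => rw [hS, Finset.sum_comm]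
    conv_rhs => rw [hS]
    simp only [star_sum]
    refine Finset.sum_congr rfl fun p _ => Finset.sum_congr rfl fun q _ => ?_
    by_cases h : p = q
    · simp [h]
    · have h' : ¬ q = p := fun h'' => h h''.symm
      simp [h, h', star_mul, CStarModuleRight.star_inner, mul_assoc]
  have hM0 : 0 ≤ M := by
    rw [hM]
    refine le_trans ?_ (Finset.le_sup' _ (Finset.mem_univ ⟨0, hn⟩))
    exact Finset.sum_nonneg fun j _ => by positivity
  have hcj : ∀ j, ‖c j‖ ^ 2 ≤ (∑ i, if i = j then 0 else ‖a i‖ ^ 2) * M := by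
    intro j
    have h1 : ‖c j‖ ≤ ∑ i, (if i = j then 0 else ‖a i‖) * (if i = j then 0 else ‖(inner A (y i) (y j) : A)‖) := by
      refine (norm_sum_le _ _).trans (Finset.sum_le_sum fun i _ => ?_)
      split_ifs with h
      · simp
      · simpa using (norm_mul_le _ _).trans (by rw [norm_star])
    have hn1 : 0 ≤ ∑ i, (if i = j then 0 else ‖a i‖) * (if i = j then 0 else ‖(inner A (y i) (y j) : A)‖) :=
      Finset.sum_nonneg fun i _ => by positivity
    calc ‖c j‖ ^ 2 ≤ (∑ i, (if i = j then 0 else ‖a i‖) * (if i = j then 0 else ‖(inner A (y i) (y j) : A)‖)) ^ 2 := by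
          exact pow_le_pow_left₀ (norm_nonneg _) h1 2
      _ ≤ (∑ i, (if i = j then 0 else ‖a i‖) ^ 2) * (∑ i, (if i = j then 0 else ‖(inner A (y i) (y j) : A)‖) ^ 2) := by
          exact Finset.sum_mul_sq_le_sq_mul_sq Finset.univ _ _
      _ ≤ (∑ i, if i = j then 0 else ‖a i‖ ^ 2) * M := by
          refine mul_le_mul (le_of_eq ?_) ?_ (Finset.sum_nonneg fun i _ => by positivity) ?_
          · exact Finset.sum_congr rfl fun i _ => by split_ifs <;> simp
          · refine le_trans (le_of_eq ?_) (Finset.le_sup' _ (Finset.mem_univ j))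
            refine Finset.sum_congr rfl fun i _ => ?_
            split_ifs with h
            · simp
            · rw [← norm_star, CStarModuleRight.star_inner]
          · exact Finset.sum_nonneg fun i _ => by positivity
  have hsum : ∑ j, ‖c j‖ ^ 2 ≤ ((n : ℝ) - 1) * (∑ i, ‖a i‖ ^ 2) * M := by
    refine (Finset.sum_le_sum fun j _ => hcj j).trans ?_
    rw [← Finset.sum_mul]
    refine mul_le_mul_of_nonneg_right (le_of_eq ?_) hM0
    rw [Finset.sum_comm, Finset.mul_sum]
    refine Finset.sum_congr rfl fun i _ => ?_
    have : ∀ t : ℝ, ∑ j : Fin n, (if i = j then 0 else t) = ((n : ℝ) - 1) * t := by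
      intro t
      have : ∀ j : Fin n, (if i = j then 0 else t) = t - (if i = j then t else 0) := by
        intro j; split_ifs <;> simp
      simp only [this, Finset.sum_sub_distrib, Finset.sum_const, Finset.card_univ,
        Fintype.card_fin, Finset.sum_ite_eq, Finset.mem_univ, if_true]
      ring
    exact this _
  calc S * S = star S * S := by rw [hSstar]
    _ ≤ (∑ j, ‖c j‖ ^ 2) • ∑ j, star (a j) * a j := by rw [hSc]; exact key_cs c a
    _ ≤ (((n : ℝ) - 1) * (∑ i, ‖a i‖ ^ 2) * M) • ∑ i, star (a i) * a i := by
        exact smul_le_smul_of_nonneg_right hsum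
          (Finset.sum_nonneg fun j _ => star_mul_self_nonneg _)
end

section
/- Let X be a Hilbert C*-module over a C*-algebra A with orthogonal vectors y₁,…,yₙ (⟨yᵢ,yⱼ⟩ = 0 for i ≠ j) and x ∈ X. Then (∑ᵢ ⟨yᵢ,x⟩*⟨yᵢ,x⟩)² ≤ (max_{1≤i≤n} ‖yᵢ‖²) · ‖∑ᵢ ⟨yᵢ,x⟩*⟨yᵢ,x⟩‖ · ⟨x,x⟩, as an inequality in the order of A. -/
open scoped RightActions

namespace CStarModuleRight

variable {A E : Type*} [NonUnitalCStarAlgebra A] [PartialOrder A] [StarOrderedRing A]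
  [AddCommGroup E] [Module ℂ E] [SMul Aᵐᵒᵖ E] [Norm E] [CStarModuleRight A E]

lemma inner_add_left' {x y z : E} : (inner A (x + y) z : A) = inner A x z + inner A y z := by
  rw [← star_inner, inner_add_right, star_add, star_inner, star_inner]

def innerRightHom (x : E) : E →+ A :=
  AddMonoidHom.mk' (fun y => (inner A x y : A)) (fun _ _ => inner_add_right)

def innerLeftHom (y : E) : E →+ A :=
  AddMonoidHom.mk' (fun x => (inner A x y : A)) (fun _ _ => inner_add_left')

lemma inner_sum_right {ι : Type*} {s : Finset ι} {x : E} {y : ι → E} :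
    (inner A x (∑ i ∈ s, y i) : A) = ∑ i ∈ s, (inner A x (y i) : A) :=
  map_sum (innerRightHom (A := A) x) y s

lemma inner_sum_left {ι : Type*} {s : Finset ι} {x : ι → E} {y : E} :
    (inner A (∑ i ∈ s, x i) y : A) = ∑ i ∈ s, (inner A (x i) y : A) :=
  map_sum (innerLeftHom (A := A) y) x s

lemma inner_sub_right' {x y z : E} : (inner A x (y - z) : A) = inner A x y - inner A x z :=
  map_sub (innerRightHom (A := A) x) y z

lemma inner_sub_left' {x y z : E} : (inner A (x - y) z : A) = inner A x z - inner A y z :=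
  map_sub (innerLeftHom (A := A) z) x y

lemma inner_zero_left' {y : E} : (inner A (0 : E) y : A) = 0 :=
  map_zero (innerLeftHom (A := A) y)

lemma inner_op_smul_left {a : A} {x y : E} : (inner A (x <• a) y : A) = star a * inner A x y := by
  rw [← star_inner, inner_op_smul_right, star_mul, star_inner]

lemma inner_smul_left_complex' {z : ℂ} {x y : E} :
    (inner A (z • x) y : A) = star z • inner A x y := by
  rw [← star_inner, inner_smul_right_complex, star_smul, star_inner]

lemma norm_sq_eq {x : E} : ‖x‖ ^ 2 = ‖(inner A x x : A)‖ := by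
  rw [norm_eq_sqrt_norm_inner_self (A := A), Real.sq_sqrt (norm_nonneg _)]

lemma inner_mul_inner_swap_le {x y : E} :
    (inner A y x : A) * (inner A x y : A) ≤ ‖x‖ ^ 2 • (inner A y y : A) := by
  rcases eq_or_ne x 0 with h | h
  · subst h
    rw [inner_zero_left', mul_zero]
    exact smul_nonneg (sq_nonneg _) inner_self_nonneg
  · set r : ℝ := ‖x‖ ^ 2 with hr
    have hrpos : 0 < r := by
      have h1 : (inner A x x : A) ≠ 0 := fun h0 => h (inner_self.mp h0)
      rw [hr, norm_sq_eq (A := A)]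
      exact norm_pos_iff.mpr h1
    have hc : star (r : ℂ) = (r : ℂ) := by rw [Complex.star_def]; exact Complex.conj_ofReal _
    have hcr : ∀ b : A, (r : ℂ) • b = r • b := fun b => (RCLike.real_smul_eq_coe_smul (K := ℂ) r b).symm
    have h₁ : ∀ a : A, (0 : A) ≤ r • (star a * a) - r • (star a * inner A x y)
        - r • (inner A y x * a) + r • (r • (inner A y y : A)) := fun a => by
      calc (0 : A) ≤ inner A (x <• a - (r : ℂ) • y) (x <• a - (r : ℂ) • y) := inner_self_nonneg
        _ = star a * inner A x x * a - r • (star a * inner A x y)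
              - r • (inner A y x * a) + r • (r • (inner A y y : A)) := by
          simp only [inner_sub_left', inner_sub_right', inner_op_smul_left, inner_op_smul_right,
            inner_smul_left_complex', inner_smul_right_complex, hc, hcr, mul_smul_comm, sub_mul, mul_sub, smul_sub,
            smul_mul_assoc, mul_assoc]
          abel
        _ ≤ r • (star a * a) - r • (star a * inner A x y)
              - r • (inner A y x * a) + r • (r • (inner A y y : A)) := by
          gcongr
          calc _ ≤ ‖(inner A x x : A)‖ • (star a * a) :=
              CStarAlgebra.star_left_conjugate_le_norm_smul (hb := star_inner x x)
            _ = r • (star a * a) := by rw [hr, norm_sq_eq (A := A)]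
    specialize h₁ (inner A x y)
    simp only [star_inner, sub_self, zero_sub, le_neg_add_iff_add_le, add_zero] at h₁
    rwa [smul_le_smul_iff_of_pos_left hrpos] at h₁

end CStarModuleRight

theorem stmt_15 {A E : Type*} [NonUnitalCStarAlgebra A] [PartialOrder A] [StarOrderedRing A]
    [AddCommGroup E] [Module ℂ E] [SMul Aᵐᵒᵖ E] [Norm E] [CStarModuleRight A E]
    {n : ℕ} (hn : 0 < n) (y : Fin n → E)
    (horth : ∀ i j, i ≠ j → (inner A (y i) (y j) : A) = 0) (x : E) :
    (∑ i, star (inner A (y i) x : A) * (inner A (y i) x : A)) *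
        (∑ i, star (inner A (y i) x : A) * (inner A (y i) x : A)) ≤
      ((Finset.univ.sup' ⟨⟨0, hn⟩, Finset.mem_univ _⟩ fun i => ‖y i‖ ^ 2) *
        ‖∑ i, star (inner A (y i) x : A) * (inner A (y i) x : A)‖) • (inner A x x : A) := by
  set a : Fin n → A := fun i => (inner A (y i) x : A) with ha
  set S : A := ∑ i, star (a i) * a i with hS
  set z : E := ∑ i, (y i) <• (a i) with hz
  set M : ℝ := Finset.univ.sup' ⟨⟨0, hn⟩, Finset.mem_univ _⟩ fun i => ‖y i‖ ^ 2 with hM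
  have hzx : (inner A z x : A) = S := by
    simp [hz, hS, ha, CStarModuleRight.inner_sum_left, CStarModuleRight.inner_op_smul_left]
  have hSsa : star S = S := by
    simp [hS, Finset.sum_apply, star_sum, mul_comm]
  have hzz : (inner A z z : A) = ∑ i, star (a i) * (inner A (y i) (y i) : A) * a i := by
    simp only [hz, CStarModuleRight.inner_sum_left, CStarModuleRight.inner_sum_right,
      CStarModuleRight.inner_op_smul_left, CStarModuleRight.inner_op_smul_right]
    refine Finset.sum_congr rfl fun j _ => ?_
    rw [Finset.sum_mul, Finset.sum_eq_single j
      (fun i _ hij => by rw [horth i j hij]; simp) (by simp)]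
  have hSnn : (0 : A) ≤ S := Finset.sum_nonneg fun i _ => star_mul_self_nonneg _
  have hMnn : 0 ≤ M := le_trans (by positivity) (Finset.le_sup' _ (Finset.mem_univ ⟨0, hn⟩))
  have hzzle : (inner A z z : A) ≤ M • S := by
    rw [hzz, hS, Finset.smul_sum]
    refine Finset.sum_le_sum fun i _ => ?_
    calc star (a i) * (inner A (y i) (y i) : A) * a i
        ≤ ‖(inner A (y i) (y i) : A)‖ • (star (a i) * a i) :=
          CStarAlgebra.star_left_conjugate_le_norm_smul (hb := CStarModuleRight.star_inner _ _)
      _ = (‖y i‖ ^ 2) • (star (a i) * a i) := by rw [CStarModuleRight.norm_sq_eq (A := A)]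
      _ ≤ M • (star (a i) * a i) := by
          exact smul_le_smul_of_nonneg_right
            (Finset.le_sup' (fun i => ‖y i‖ ^ 2) (Finset.mem_univ i)) (star_mul_self_nonneg _)
  have hznorm : ‖z‖ ^ 2 ≤ M * ‖S‖ := by
    rw [CStarModuleRight.norm_sq_eq (A := A)]
    calc ‖(inner A z z : A)‖ ≤ ‖M • S‖ :=
          CStarAlgebra.norm_le_norm_of_nonneg_of_le CStarModuleRight.inner_self_nonneg hzzle
      _ = M * ‖S‖ := by rw [norm_smul, Real.norm_of_nonneg hMnn]
  calc S * S = (inner A x z : A) * (inner A z x : A) := by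
        rw [hzx, ← hSsa, ← CStarModuleRight.star_inner, hzx]
    _ ≤ ‖z‖ ^ 2 • (inner A x x : A) := CStarModuleRight.inner_mul_inner_swap_le
    _ ≤ (M * ‖S‖) • (inner A x x : A) :=
        smul_le_smul_of_nonneg_right hznorm CStarModuleRight.inner_self_nonneg
end

section
/- Let X be a Hilbert C*-module over a C*-algebra A and y₁,…,yₙ ∈ X, a₁,…,aₙ ∈ A. Then ‖∑ᵢ yᵢaᵢ*‖² ≤ (∑ᵢ ‖aᵢ‖²) · [max_{1≤i≤n} ‖yᵢ‖² + (∑_{i≠j} ‖⟨yᵢ,yⱼ⟩‖²)^{1/2}], as an inequality of real numbers. -/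
open scoped RightActions

/-- The December 2024 Mathlib `CStarModule` (right action `SMul Aᵐᵒᵖ E`), restated verbatim
under a new name, since Mathlib's `CStarModule` now uses a left action `SMul A E`. -/
class CStarModuleOld (A E : Type*) [NonUnitalSemiring A] [StarRing A]
    [Module ℂ A] [AddCommGroup E] [Module ℂ E] [PartialOrder A] [SMul Aᵐᵒᵖ E] [Norm A] [Norm E]
    extends Inner A E where
  inner_add_right {x} {y} {z} : inner x (y + z) = inner x y + inner x z
  inner_self_nonneg {x} : 0 ≤ inner x x
  inner_self {x} : inner x x = 0 ↔ x = 0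
  inner_op_smul_right {a : A} {x y : E} : inner x (y <• a) = inner x y * a
  inner_smul_right_complex {z : ℂ} {x} {y} : inner x (z • y) = z • inner x y
  star_inner x y : star (inner x y) = inner y x
  norm_eq_sqrt_norm_inner_self x : ‖x‖ = √‖inner x x‖

section
variable {A E : Type*} [NonUnitalCStarAlgebra A] [PartialOrder A] [StarOrderedRing A]
    [AddCommGroup E] [Module ℂ E] [SMul Aᵐᵒᵖ E] [Norm E] [CStarModuleOld A E]

theorem cso_inner_zero_right (x : E) : inner A x (0 : E) = 0 := by
  have h := CStarModuleOld.inner_add_right (A := A) (x := x) (y := (0 : E)) (z := 0)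
  calc inner A x (0 : E) = inner A x ((0 : E) + 0) - inner A x 0 := by rw [h]; abel
    _ = 0 := by rw [add_zero, sub_self]

theorem cso_inner_zero_left (y : E) : inner A (0 : E) y = 0 := by
  rw [← CStarModuleOld.star_inner (A := A) y (0 : E), cso_inner_zero_right, star_zero]

theorem cso_inner_add_left (x y z : E) : inner A (x + y) z = inner A x z + inner A y z := by
  rw [← CStarModuleOld.star_inner (A := A) z (x + y), CStarModuleOld.inner_add_right, star_add,
    CStarModuleOld.star_inner, CStarModuleOld.star_inner]

theorem cso_inner_sum_right {ι : Type*} (s : Finset ι) (x : E) (y : ι → E) :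
    inner A x (∑ i ∈ s, y i) = ∑ i ∈ s, inner A x (y i) := by
  classical
  refine Finset.induction_on s ?_ ?_
  · simp [cso_inner_zero_right]
  · intro j s hj ih
    rw [Finset.sum_insert hj, Finset.sum_insert hj, CStarModuleOld.inner_add_right, ih]

theorem cso_inner_sum_left {ι : Type*} (s : Finset ι) (x : ι → E) (y : E) :
    inner A (∑ i ∈ s, x i) y = ∑ i ∈ s, inner A (x i) y := by
  classical
  refine Finset.induction_on s ?_ ?_
  · simp [cso_inner_zero_left]
  · intro j s hj ih
    rw [Finset.sum_insert hj, Finset.sum_insert hj, cso_inner_add_left, ih]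

theorem cso_inner_op_smul_left (a : A) (x y : E) : inner A (x <• a) y = star a * inner A x y := by
  rw [← CStarModuleOld.star_inner (A := A) y (x <• a), CStarModuleOld.inner_op_smul_right, star_mul,
    CStarModuleOld.star_inner]

theorem cso_norm_sq_eq {x : E} : ‖x‖ ^ 2 = ‖inner A x x‖ := by
  rw [CStarModuleOld.norm_eq_sqrt_norm_inner_self (A := A) x, Real.sq_sqrt (norm_nonneg _)]

end


theorem stmt_19 {A E : Type*} [NonUnitalCStarAlgebra A] [PartialOrder A] [StarOrderedRing A]
    [AddCommGroup E] [Module ℂ E] [SMul Aᵐᵒᵖ E] [Norm E] [CStarModuleOld A E]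
    {n : ℕ} (hn : 0 < n) (y : Fin n → E) (a : Fin n → A) :
    ‖∑ i, (y i <• star (a i))‖ ^ 2 ≤
      (∑ i, ‖a i‖ ^ 2) *
        ((Finset.univ.sup' ⟨⟨0, hn⟩, Finset.mem_univ _⟩ fun i => ‖y i‖ ^ 2) +
          Real.sqrt (∑ i, ∑ j, if i = j then 0 else ‖(inner A (y i) (y j) : A)‖ ^ 2)) := by
  classical
  set M : ℝ := Finset.univ.sup' ⟨⟨0, hn⟩, Finset.mem_univ _⟩ fun i => ‖y i‖ ^ 2 with hM
  set S : ℝ := ∑ i, ∑ j, if i = j then 0 else ‖(inner A (y i) (y j) : A)‖ ^ 2 with hS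
  have hS0 : 0 ≤ S := by
    apply Finset.sum_nonneg; intro i _
    apply Finset.sum_nonneg; intro j _
    split <;> positivity
  -- Step 1: norm squared equals norm of double sum of products
  have step1 : ‖∑ i, (y i <• star (a i))‖ ^ 2
      = ‖∑ i, ∑ j, a i * (inner A (y i) (y j) : A) * star (a j)‖ := by
    rw [cso_norm_sq_eq (A := A)]
    congr 1
    rw [cso_inner_sum_left]
    refine Finset.sum_congr rfl fun i _ => ?_
    rw [cso_inner_sum_right]
    refine Finset.sum_congr rfl fun j _ => ?_
    rw [cso_inner_op_smul_left, CStarModuleOld.inner_op_smul_right, star_star, mul_assoc]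
  -- Step 2: triangle + submultiplicativity
  have step2 : ‖∑ i, ∑ j, a i * (inner A (y i) (y j) : A) * star (a j)‖
      ≤ ∑ i, ∑ j, ‖a i‖ * ‖(inner A (y i) (y j) : A)‖ * ‖a j‖ := by
    refine (norm_sum_le _ _).trans (Finset.sum_le_sum fun i _ => ?_)
    refine (norm_sum_le _ _).trans (Finset.sum_le_sum fun j _ => ?_)
    calc ‖a i * (inner A (y i) (y j) : A) * star (a j)‖
        ≤ ‖a i * (inner A (y i) (y j) : A)‖ * ‖star (a j)‖ := norm_mul_le _ _
      _ ≤ ‖a i‖ * ‖(inner A (y i) (y j) : A)‖ * ‖star (a j)‖ := by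
          gcongr; exact norm_mul_le _ _
      _ = ‖a i‖ * ‖(inner A (y i) (y j) : A)‖ * ‖a j‖ := by rw [norm_star]
  -- split into diagonal and off-diagonal
  have split : (∑ i, ∑ j, ‖a i‖ * ‖(inner A (y i) (y j) : A)‖ * ‖a j‖)
      = (∑ i, ‖a i‖ ^ 2 * ‖y i‖ ^ 2)
        + ∑ i, ∑ j, (if i = j then 0 else ‖a i‖ * ‖(inner A (y i) (y j) : A)‖ * ‖a j‖) := by
    have : ∀ i j : Fin n, ‖a i‖ * ‖(inner A (y i) (y j) : A)‖ * ‖a j‖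
        = (if i = j then ‖a i‖ * ‖(inner A (y i) (y j) : A)‖ * ‖a j‖ else 0)
          + (if i = j then 0 else ‖a i‖ * ‖(inner A (y i) (y j) : A)‖ * ‖a j‖) := by
      intro i j; split <;> simp
    calc (∑ i, ∑ j, ‖a i‖ * ‖(inner A (y i) (y j) : A)‖ * ‖a j‖)
        = ∑ i, ∑ j, ((if i = j then ‖a i‖ * ‖(inner A (y i) (y j) : A)‖ * ‖a j‖ else 0)
            + (if i = j then 0 else ‖a i‖ * ‖(inner A (y i) (y j) : A)‖ * ‖a j‖)) :=
          Finset.sum_congr rfl fun i _ => Finset.sum_congr rfl fun j _ => this i j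
      _ = (∑ i, ∑ j, (if i = j then ‖a i‖ * ‖(inner A (y i) (y j) : A)‖ * ‖a j‖ else 0))
            + ∑ i, ∑ j, (if i = j then 0 else ‖a i‖ * ‖(inner A (y i) (y j) : A)‖ * ‖a j‖) := by
          rw [← Finset.sum_add_distrib]
          exact Finset.sum_congr rfl fun i _ => Finset.sum_add_distrib
      _ = (∑ i, ‖a i‖ ^ 2 * ‖y i‖ ^ 2)
            + ∑ i, ∑ j, (if i = j then 0 else ‖a i‖ * ‖(inner A (y i) (y j) : A)‖ * ‖a j‖) := by
          congr 1
          refine Finset.sum_congr rfl fun i _ => ?_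
          rw [Finset.sum_ite_eq Finset.univ i
            (fun j => ‖a i‖ * ‖(inner A (y i) (y j) : A)‖ * ‖a j‖),
            if_pos (Finset.mem_univ i), ← cso_norm_sq_eq (A := A)]
          ring
  -- diagonal bound
  have diag : (∑ i, ‖a i‖ ^ 2 * ‖y i‖ ^ 2) ≤ (∑ i, ‖a i‖ ^ 2) * M := by
    rw [Finset.sum_mul]
    refine Finset.sum_le_sum fun i _ => ?_
    have : ‖y i‖ ^ 2 ≤ M := by
      rw [hM]; exact Finset.le_sup' (fun i => ‖y i‖ ^ 2) (Finset.mem_univ i)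
    have h2 : (0:ℝ) ≤ ‖a i‖ ^ 2 := sq_nonneg _
    nlinarith
  -- off-diagonal bound via Cauchy-Schwarz
  have offdiag : (∑ i, ∑ j, (if i = j then 0 else ‖a i‖ * ‖(inner A (y i) (y j) : A)‖ * ‖a j‖))
      ≤ (∑ i, ‖a i‖ ^ 2) * Real.sqrt S := by
    set T : ℝ := ∑ i, ∑ j, (if i = j then 0 else ‖a i‖ * ‖(inner A (y i) (y j) : A)‖ * ‖a j‖)
      with hT
    have hT0 : 0 ≤ T := by
      apply Finset.sum_nonneg; intro i _
      apply Finset.sum_nonneg; intro j _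
      split <;> positivity
    -- rewrite both T and S as sums over product
    have hTprod : T = ∑ p : Fin n × Fin n,
        (if p.1 = p.2 then 0 else (‖a p.1‖ * ‖a p.2‖) * ‖(inner A (y p.1) (y p.2) : A)‖) := by
      rw [hT, Fintype.sum_prod_type]
      refine Finset.sum_congr rfl fun i _ => Finset.sum_congr rfl fun j _ => ?_
      split <;> ring
    have hSprod : S = ∑ p : Fin n × Fin n,
        (if p.1 = p.2 then 0 else ‖(inner A (y p.1) (y p.2) : A)‖ ^ 2) := by
      rw [hS, Fintype.sum_prod_type]
    -- Cauchy–Schwarz on the product index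
    have key : T ^ 2 ≤ (∑ i, ‖a i‖ ^ 2) ^ 2 * S := by
      have cs := Finset.sum_mul_sq_le_sq_mul_sq Finset.univ
        (fun p : Fin n × Fin n => if p.1 = p.2 then 0 else ‖a p.1‖ * ‖a p.2‖)
        (fun p : Fin n × Fin n => if p.1 = p.2 then 0 else ‖(inner A (y p.1) (y p.2) : A)‖)
      have e1 : (∑ p : Fin n × Fin n,
          (if p.1 = p.2 then 0 else ‖a p.1‖ * ‖a p.2‖)
          * (if p.1 = p.2 then 0 else ‖(inner A (y p.1) (y p.2) : A)‖)) = T := by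
        rw [hTprod]; refine Finset.sum_congr rfl fun p _ => ?_; split <;> simp
      have e2 : (∑ p : Fin n × Fin n,
          (if p.1 = p.2 then 0 else ‖(inner A (y p.1) (y p.2) : A)‖) ^ 2) = S := by
        rw [hSprod]; refine Finset.sum_congr rfl fun p _ => ?_
        split <;> simp
      have e3 : (∑ p : Fin n × Fin n,
          (if p.1 = p.2 then 0 else ‖a p.1‖ * ‖a p.2‖) ^ 2) ≤ (∑ i, ‖a i‖ ^ 2) ^ 2 := by
        have : (∑ i, ‖a i‖ ^ 2) ^ 2 = ∑ p : Fin n × Fin n, ‖a p.1‖ ^ 2 * ‖a p.2‖ ^ 2 := by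
          rw [sq, Finset.sum_mul_sum, Fintype.sum_prod_type]
        rw [this]
        refine Finset.sum_le_sum fun p _ => ?_
        split
        · simpa using mul_nonneg (sq_nonneg ‖a p.1‖) (sq_nonneg ‖a p.2‖)
        · rw [mul_pow]
      calc T ^ 2 = (∑ p : Fin n × Fin n,
            (if p.1 = p.2 then 0 else ‖a p.1‖ * ‖a p.2‖)
            * (if p.1 = p.2 then 0 else ‖(inner A (y p.1) (y p.2) : A)‖)) ^ 2 := by rw [e1]
        _ ≤ (∑ p : Fin n × Fin n, (if p.1 = p.2 then 0 else ‖a p.1‖ * ‖a p.2‖) ^ 2)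
            * (∑ p : Fin n × Fin n,
              (if p.1 = p.2 then 0 else ‖(inner A (y p.1) (y p.2) : A)‖) ^ 2) := cs
        _ ≤ (∑ i, ‖a i‖ ^ 2) ^ 2 * S := by rw [e2]; exact mul_le_mul_of_nonneg_right e3 hS0
    have hrhs0 : 0 ≤ (∑ i, ‖a i‖ ^ 2) * Real.sqrt S := by positivity
    nlinarith [Real.sq_sqrt hS0, Real.sqrt_nonneg S, key, hT0, hrhs0]
  have hMnn : 0 ≤ M := by
    refine le_trans (sq_nonneg ‖y ⟨0, hn⟩‖) ?_
    rw [hM]; exact Finset.le_sup' (fun i => ‖y i‖ ^ 2) (Finset.mem_univ _)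
  calc ‖∑ i, (y i <• star (a i))‖ ^ 2
      = ‖∑ i, ∑ j, a i * (inner A (y i) (y j) : A) * star (a j)‖ := step1
    _ ≤ ∑ i, ∑ j, ‖a i‖ * ‖(inner A (y i) (y j) : A)‖ * ‖a j‖ := step2
    _ = (∑ i, ‖a i‖ ^ 2 * ‖y i‖ ^ 2)
        + ∑ i, ∑ j, (if i = j then 0 else ‖a i‖ * ‖(inner A (y i) (y j) : A)‖ * ‖a j‖) := split
    _ ≤ (∑ i, ‖a i‖ ^ 2) * M + (∑ i, ‖a i‖ ^ 2) * Real.sqrt S := add_le_add diag offdiag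
    _ = (∑ i, ‖a i‖ ^ 2) * (M + Real.sqrt S) := by ring
end
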